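/- There exist constants gamma > 0 and theta > 0 (depending only on lambda, mu and the laws of U_0, V_0) such that for every real alpha >= 1 and every n >= 0, E[ |W_n^1 - W_n^2|^alpha ] <= ( exp( - max(gamma*n - mu*theta*w1, 0) ) + exp( - max(gamma*n - mu*theta*w2, 0) ) ) * |w1 - w2|^alpha. -/

import Mathlib

open MeasureTheory ProbabilityTheory Real

lemma exp_le_quadratic (x : ℝ) : Real.exp x ≤ 1 + x + x ^ 2 * Real.exp |x| := by
  have hmul : Real.exp x * Real.exp (-x) = 1 := by rw [← Real.exp_add]; simp
  rcases le_or_gt 0 x with hx | hx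
  · rw [abs_of_nonneg hx]
    have h1 : (1 - x) * Real.exp x ≤ 1 := by
      calc (1 - x) * Real.exp x ≤ Real.exp (-x) * Real.exp x := by
            apply mul_le_mul_of_nonneg_right _ (Real.exp_pos x).le
            linarith [Real.add_one_le_exp (-x)]
        _ = 1 := by rw [← Real.exp_add]; simp
    nlinarith [Real.exp_pos x, mul_le_mul_of_nonneg_left h1 hx]
  · rw [abs_of_neg hx]
    have h1 : (1 + x) * Real.exp (-x) ≤ 1 := by
      calc (1 + x) * Real.exp (-x) ≤ Real.exp x * Real.exp (-x) := by
            apply mul_le_mul_of_nonneg_right _ (Real.exp_pos (-x)).le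
            linarith [Real.add_one_le_exp x]
        _ = 1 := hmul
    have h2 : 1 - x ≤ Real.exp (-x) := by linarith [Real.add_one_le_exp (-x)]
    have h3 : 0 < Real.exp (-x) := Real.exp_pos _
    have h4 : 0 < Real.exp x := Real.exp_pos _
    nlinarith [sq_nonneg x, sq_nonneg (Real.exp (-x)), mul_pos h3 h3,
      mul_le_mul_of_nonneg_left h2 (sq_nonneg x), sq_nonneg (x * Real.exp (-x))]

lemma sq_le_exp_aux {c x : ℝ} (hc : 0 < c) (hx : 0 ≤ x) :
    x ^ 2 ≤ (2 / c) ^ 2 * Real.exp (c * x) := by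
  have h : x ≤ (2 / c) * Real.exp (c * x / 2) := by
    have h3 : c * x / 2 ≤ Real.exp (c * x / 2) := by linarith [Real.add_one_le_exp (c * x / 2)]
    calc x = (2 / c) * (c * x / 2) := by field_simp
      _ ≤ (2 / c) * Real.exp (c * x / 2) := by
          exact mul_le_mul_of_nonneg_left h3 (by positivity)
  calc x ^ 2 ≤ ((2 / c) * Real.exp (c * x / 2)) ^ 2 := by
        exact pow_le_pow_left₀ hx h 2
    _ = (2 / c) ^ 2 * Real.exp (c * x) := by
        rw [mul_pow, sq (Real.exp _), ← Real.exp_add]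
        ring_nf

lemma det_rec (a b : ℝ) (hb : 0 ≤ b) (hba : b ≤ a) (x : ℕ → ℝ) (A B : ℕ → ℝ)
    (hA0 : A 0 = a) (hB0 : B 0 = b)
    (hA : ∀ n, A (n + 1) = max (A n + x n) 0)
    (hB : ∀ n, B (n + 1) = max (B n + x n) 0) (n : ℕ) :
    B n ≤ A n ∧ A n - B n ≤ a - b ∧ 0 ≤ B n ∧
      (B n < A n → A n = a + ∑ k ∈ Finset.range n, x k) := by
  induction n with
  | zero =>
    refine ⟨by rw [hA0, hB0]; exact hba, by rw [hA0, hB0], by rw [hB0]; exact hb, ?_⟩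
    intro _; simp [hA0]
  | succ n ih =>
    obtain ⟨h1, h2, h3, h4⟩ := ih
    refine ⟨?_, ?_, ?_, ?_⟩
    · rw [hA, hB]; exact max_le_max (by linarith) le_rfl
    · rw [hA, hB]
      rcases le_total (A n + x n) 0 with h | h
      · rw [max_eq_right h]
        have : (0 : ℝ) ≤ max (B n + x n) 0 := le_max_right _ _
        linarith
      · rw [max_eq_left h]
        have : B n + x n ≤ max (B n + x n) 0 := le_max_left _ _
        linarith
    · rw [hB]; exact le_max_right _ _
    · intro hlt
      rw [hA, hB] at hlt
      rw [hA]
      have hApos : 0 < max (A n + x n) 0 :=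
        lt_of_le_of_lt (le_max_right _ _) hlt
      have hAx : 0 < A n + x n := by
        rcases lt_max_iff.mp hApos with h | h
        · exact h
        · exact absurd h (lt_irrefl 0)
      have hAeq : max (A n + x n) 0 = A n + x n := max_eq_left hAx.le
      have hBn : B n < A n := by
        have hle : B n + x n ≤ max (B n + x n) 0 := le_max_left _ _
        rw [hAeq] at hlt
        linarith
      rw [hAeq, h4 hBn, Finset.sum_range_succ]; ring

lemma factor_bound {Ω : Type*} [MeasureSpace Ω] [IsProbabilityMeasure (ℙ : Measure Ω)]
    (X : Ω → ℝ) (hm : Measurable X) (hnn : ∀ ω, 0 ≤ X ω)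
    (η : ℝ) (hη : 0 < η) (hexp : Integrable (fun ω => Real.exp (η * X ω)) ℙ)
    (s : ℝ) (hs : |s| ≤ η / 2) :
    ∫ ω, Real.exp (s * X ω) ∂ℙ ≤
      1 + s * ∫ ω, X ω ∂ℙ + s ^ 2 * ((4 / η) ^ 2 * ∫ ω, Real.exp (η * X ω) ∂ℙ) := by
  have hXint : Integrable X ℙ := by
    refine (hexp.const_mul (1 / η)).mono' hm.aestronglyMeasurable (ae_of_all _ fun ω => ?_)
    rw [Real.norm_eq_abs, abs_of_nonneg (hnn ω)]
    have h1 : η * X ω ≤ Real.exp (η * X ω) := by linarith [Real.add_one_le_exp (η * X ω)]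
    rw [div_mul_eq_mul_div, one_mul, le_div_iff₀ hη]
    linarith
  have key : ∀ ω, Real.exp (s * X ω) ≤
      1 + s * X ω + s ^ 2 * ((4 / η) ^ 2 * Real.exp (η * X ω)) := by
    intro ω
    have h1 := exp_le_quadratic (s * X ω)
    have h2 : |s * X ω| ≤ η / 2 * X ω := by
      rw [abs_mul, abs_of_nonneg (hnn ω)]
      exact mul_le_mul_of_nonneg_right hs (hnn ω)
    have h3 : (s * X ω) ^ 2 * Real.exp |s * X ω| ≤
        s ^ 2 * ((4 / η) ^ 2 * Real.exp (η * X ω)) := by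
      have e1 : Real.exp |s * X ω| ≤ Real.exp (η / 2 * X ω) := Real.exp_le_exp.mpr h2
      have e2 : X ω ^ 2 ≤ (2 / (η / 2)) ^ 2 * Real.exp (η / 2 * X ω) :=
        sq_le_exp_aux (by positivity) (hnn ω)
      have e3 : (2 / (η / 2)) = 4 / η := by
        rw [div_div_eq_mul_div]; norm_num
      rw [e3] at e2
      calc (s * X ω) ^ 2 * Real.exp |s * X ω|
          ≤ (s * X ω) ^ 2 * Real.exp (η / 2 * X ω) :=
            mul_le_mul_of_nonneg_left e1 (sq_nonneg _)
        _ = s ^ 2 * (X ω ^ 2 * Real.exp (η / 2 * X ω)) := by ring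
        _ ≤ s ^ 2 * ((4 / η) ^ 2 * Real.exp (η / 2 * X ω) * Real.exp (η / 2 * X ω)) := by
            refine mul_le_mul_of_nonneg_left ?_ (sq_nonneg s)
            exact mul_le_mul_of_nonneg_right e2 (Real.exp_pos _).le
        _ = s ^ 2 * ((4 / η) ^ 2 * Real.exp (η * X ω)) := by
            rw [mul_assoc, ← Real.exp_add]; ring_nf
    linarith
  have intL : Integrable (fun ω => Real.exp (s * X ω)) ℙ := by
    refine hexp.mono' ((hm.const_mul s).exp).aestronglyMeasurable (ae_of_all _ fun ω => ?_)
    rw [Real.norm_eq_abs, abs_of_pos (Real.exp_pos _), Real.exp_le_exp]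
    have : s * X ω ≤ |s| * X ω := mul_le_mul_of_nonneg_right (le_abs_self s) (hnn ω)
    nlinarith [hnn ω, hη.le]
  have i0 : Integrable (fun _ : Ω => (1 : ℝ)) ℙ := integrable_const 1
  have i1 : Integrable (fun ω => s * X ω) ℙ := hXint.const_mul s
  have i2 : Integrable (fun ω => s ^ 2 * ((4 / η) ^ 2 * Real.exp (η * X ω))) ℙ :=
    (hexp.const_mul ((4 / η) ^ 2)).const_mul (s ^ 2)
  calc ∫ ω, Real.exp (s * X ω) ∂ℙ
      ≤ ∫ ω, (1 + s * X ω + s ^ 2 * ((4 / η) ^ 2 * Real.exp (η * X ω))) ∂ℙ :=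
        integral_mono intL ((i0.add i1).add i2) key
    _ = 1 + s * ∫ ω, X ω ∂ℙ + s ^ 2 * ((4 / η) ^ 2 * ∫ ω, Real.exp (η * X ω) ∂ℙ) := by
        have i01 : Integrable (fun ω => 1 + s * X ω) ℙ := by exact i0.add i1
        rw [integral_add i01 i2, integral_add i0 i1, integral_const,
          integral_const_mul, integral_const_mul, integral_const_mul]
        simp
lemma main_aux {Ω : Type*} [MeasureSpace Ω] [IsProbabilityMeasure (ℙ : Measure Ω)]
    (U V : ℕ → Ω → ℝ)
    (hUmeas : ∀ n, Measurable (U n)) (hVmeas : ∀ n, Measurable (V n))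
    (lam mu t γ : ℝ) (hlam : 0 < lam) (hmu : 0 < mu)
    (hcher : ∀ w : ℝ, 0 ≤ w → ∀ n : ℕ,
      (ℙ {ω | -w ≤ ∑ k ∈ Finset.range n, (V k ω / mu - U k ω / lam)}).toReal ≤
        Real.exp (-max (γ * n - t * w) 0))
    (w1 w2 : ℝ) (hw2 : 0 ≤ w2) (hord : w2 ≤ w1)
    (W1 W2 : ℕ → Ω → ℝ)
    (h10 : ∀ ω, W1 0 ω = w1) (h20 : ∀ ω, W2 0 ω = w2)
    (h1rec : ∀ n ω, W1 (n + 1) ω = max (W1 n ω + V n ω / mu - U n ω / lam) 0)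
    (h2rec : ∀ n ω, W2 (n + 1) ω = max (W2 n ω + V n ω / mu - U n ω / lam) 0)
    (α : ℝ) (hα : 1 ≤ α) (n : ℕ) :
    (∫ ω, |W1 n ω - W2 n ω| ^ α ∂ℙ) ≤
      Real.exp (-max (γ * n - t * w1) 0) * |w1 - w2| ^ α := by
  have hw1 : 0 ≤ w1 := hw2.trans hord
  -- pathwise facts
  have hdet : ∀ ω, W2 n ω ≤ W1 n ω ∧ W1 n ω - W2 n ω ≤ w1 - w2 ∧ 0 ≤ W2 n ω ∧
      (W2 n ω < W1 n ω → W1 n ω = w1 + ∑ k ∈ Finset.range n,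
        (V k ω / mu - U k ω / lam)) := by
    intro ω
    exact det_rec w1 w2 hw2 hord (fun k => V k ω / mu - U k ω / lam)
      (fun m => W1 m ω) (fun m => W2 m ω) (h10 ω) (h20 ω)
      (fun m => by show W1 (m+1) ω = _; rw [h1rec m ω]; congr 1; ring)
      (fun m => by show W2 (m+1) ω = _; rw [h2rec m ω]; congr 1; ring) n
  set S : Ω → ℝ := fun ω => ∑ k ∈ Finset.range n, (V k ω / mu - U k ω / lam) with hS
  set E : Set Ω := {ω | -w1 ≤ S ω} with hE
  have hSmeas : Measurable S := by
    apply Finset.measurable_sum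
    intro k _
    exact ((hVmeas k).div_const mu).sub ((hUmeas k).div_const lam)
  have hEmeas : MeasurableSet E := measurableSet_le measurable_const hSmeas
  -- measurability of W1 n, W2 n
  have hWmeas : ∀ (W : ℕ → Ω → ℝ) (w : ℝ), (∀ ω, W 0 ω = w) →
      (∀ m ω, W (m + 1) ω = max (W m ω + V m ω / mu - U m ω / lam) 0) →
      ∀ m, Measurable (W m) := by
    intro W w h0 hrec m
    induction m with
    | zero =>
      have : W 0 = fun _ => w := funext h0
      rw [this]; exact measurable_const
    | succ m ih =>
      have : W (m + 1) = fun ω => max (W m ω + V m ω / mu - U m ω / lam) 0 :=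
        funext (hrec m)
      rw [this]
      exact ((ih.add ((hVmeas m).div_const mu)).sub ((hUmeas m).div_const lam)).max
        measurable_const
  have hW1m := hWmeas W1 w1 h10 h1rec n
  have hW2m := hWmeas W2 w2 h20 h2rec n
  have hDle : ∀ ω, |W1 n ω - W2 n ω| ≤ |w1 - w2| := by
    intro ω
    obtain ⟨d1, d2, _, _⟩ := hdet ω
    rw [abs_of_nonneg (by linarith), abs_of_nonneg (by linarith)]
    exact d2
  have hptw : ∀ ω, |W1 n ω - W2 n ω| ^ α ≤
      E.indicator (fun _ => |w1 - w2| ^ α) ω := by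
    intro ω
    by_cases hEω : ω ∈ E
    · rw [Set.indicator_of_mem hEω]
      exact Real.rpow_le_rpow (abs_nonneg _) (hDle ω) (by linarith)
    · rw [Set.indicator_of_notMem hEω]
      have heq : W1 n ω = W2 n ω := by
        by_contra hne
        obtain ⟨d1, _, d3, d4⟩ := hdet ω
        have hlt : W2 n ω < W1 n ω := lt_of_le_of_ne d1 (Ne.symm hne)
        have := d4 hlt
        apply hEω
        rw [hE]
        simp only [Set.mem_setOf_eq]
        have : 0 < w1 + S ω := by
          rw [hS]; rw [← this]; linarith
        linarith
      rw [heq, sub_self, abs_zero, Real.zero_rpow (by linarith)]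
  have hint1 : Integrable (fun ω => |W1 n ω - W2 n ω| ^ α) ℙ := by
    refine (integrable_const (|w1 - w2| ^ α)).mono'
      ((hW1m.sub hW2m).abs.pow_const α).aestronglyMeasurable (ae_of_all _ fun ω => ?_)
    rw [Real.norm_eq_abs, abs_of_nonneg (Real.rpow_nonneg (abs_nonneg _) α)]
    exact Real.rpow_le_rpow (abs_nonneg _) (hDle ω) (by linarith)
  have hint2 : Integrable (E.indicator fun _ => |w1 - w2| ^ α) ℙ :=
    (integrable_const _).indicator hEmeas
  calc ∫ ω, |W1 n ω - W2 n ω| ^ α ∂ℙ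
      ≤ ∫ ω, E.indicator (fun _ => |w1 - w2| ^ α) ω ∂ℙ :=
        integral_mono hint1 hint2 hptw
    _ = (ℙ E).toReal • (|w1 - w2| ^ α) := integral_indicator_const _ hEmeas
    _ ≤ Real.exp (-max (γ * n - t * w1) 0) * |w1 - w2| ^ α := by
        rw [smul_eq_mul]
        exact mul_le_mul_of_nonneg_right (hcher w1 hw1 n)
          (Real.rpow_nonneg (abs_nonneg _) α)
set_option maxHeartbeats 1000000 in
/-- Lipschitz continuity (with exponential forgetting of the initial
condition) of synchronously coupled GI/GI/1 waiting-time processes. -/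
theorem stmt3
    {Ω : Type*} [MeasureSpace Ω] [IsProbabilityMeasure (ℙ : Measure Ω)]
    (U V : ℕ → Ω → ℝ)
    (hUmeas : ∀ n, Measurable (U n)) (hVmeas : ∀ n, Measurable (V n))
    (hindep : iIndepFun
      (fun i : ℕ ⊕ ℕ => Sum.elim U V i) ℙ)
    (hUnonneg : ∀ n ω, 0 ≤ U n ω) (hVnonneg : ∀ n ω, 0 ≤ V n ω)
    (hUid : ∀ n, IdentDistrib (U n) (U 0) ℙ ℙ)
    (hVid : ∀ n, IdentDistrib (V n) (V 0) ℙ ℙ)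
    (hUmean : ∫ ω, U 0 ω ∂ℙ = 1) (hVmean : ∫ ω, V 0 ω ∂ℙ = 1)
    (η : ℝ) (hη : 0 < η)
    (hUexp : Integrable (fun ω => Real.exp (η * U 0 ω)) ℙ)
    (hVexp : Integrable (fun ω => Real.exp (η * V 0 ω)) ℙ)
    (lam mu : ℝ) (hlam : 0 < lam) (hlammu : lam < mu) :
    ∃ γ > (0 : ℝ), ∃ θ > (0 : ℝ),
      ∀ w1 w2 : ℝ, 0 ≤ w1 → 0 ≤ w2 →
      ∀ W1 W2 : ℕ → Ω → ℝ,
        (∀ ω, W1 0 ω = w1) → (∀ ω, W2 0 ω = w2) →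
        (∀ n ω, W1 (n + 1) ω = max (W1 n ω + V n ω / mu - U n ω / lam) 0) →
        (∀ n ω, W2 (n + 1) ω = max (W2 n ω + V n ω / mu - U n ω / lam) 0) →
        ∀ α : ℝ, 1 ≤ α → ∀ n : ℕ,
          (∫ ω, |W1 n ω - W2 n ω| ^ α ∂ℙ) ≤
            (Real.exp (-max (γ * n - mu * θ * w1) 0) +
              Real.exp (-max (γ * n - mu * θ * w2) 0)) * |w1 - w2| ^ α := by
  have hmu : 0 < mu := hlam.trans hlammu
  -- constants
  set EU := ∫ ω, Real.exp (η * U 0 ω) ∂ℙ with hEUdef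
  set EV := ∫ ω, Real.exp (η * V 0 ω) ∂ℙ with hEVdef
  have hEU0 : 0 ≤ EU := integral_nonneg fun ω => (Real.exp_pos _).le
  have hEV0 : 0 ≤ EV := integral_nonneg fun ω => (Real.exp_pos _).le
  set CU := (4 / η) ^ 2 * EU / lam ^ 2 with hCUdef
  set CV := (4 / η) ^ 2 * EV / mu ^ 2 with hCVdef
  have hCU0 : 0 ≤ CU := div_nonneg (mul_nonneg (sq_nonneg _) hEU0) (sq_nonneg _)
  have hCV0 : 0 ≤ CV := div_nonneg (mul_nonneg (sq_nonneg _) hEV0) (sq_nonneg _)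
  set C := CU + CV with hCdef
  have hC0 : 0 ≤ C := add_nonneg hCU0 hCV0
  set δ := 1 / lam - 1 / mu with hδdef
  have hδ : 0 < δ := sub_pos.mpr (one_div_lt_one_div_of_lt hlam hlammu)
  set t := min (η * lam / 2) (δ / (2 * (C + 1))) with htdef
  have ht : 0 < t := lt_min (by positivity) (div_pos hδ (by linarith))
  have ht1 : t ≤ η * lam / 2 := min_le_left _ _
  have ht2 : t ≤ δ / (2 * (C + 1)) := min_le_right _ _
  have hs1' : t / lam ≤ η / 2 := by
    rw [div_le_iff₀ hlam]; linarith
  have hs2' : t / mu ≤ η / 2 := by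
    rw [div_le_iff₀ hmu]
    have := mul_le_mul_of_nonneg_left hlammu.le hη.le
    linarith
  -- factor bounds
  set f := ∫ ω, Real.exp (-(t / lam) * U 0 ω) ∂ℙ with hfdef
  set g := ∫ ω, Real.exp ((t / mu) * V 0 ω) ∂ℙ with hgdef
  have hf0 : 0 ≤ f := integral_nonneg fun ω => (Real.exp_pos _).le
  have hg0 : 0 ≤ g := integral_nonneg fun ω => (Real.exp_pos _).le
  have hfb := factor_bound (U 0) (hUmeas 0) (hUnonneg 0) η hη hUexp (-(t / lam))
    (by rw [abs_neg, abs_of_nonneg (div_nonneg ht.le hlam.le)]; exact hs1')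
  rw [hUmean] at hfb
  have hgb := factor_bound (V 0) (hVmeas 0) (hVnonneg 0) η hη hVexp (t / mu)
    (by rw [abs_of_nonneg (div_nonneg ht.le hmu.le)]; exact hs2')
  rw [hVmean] at hgb
  have hfe : f ≤ Real.exp (-(t / lam) + t ^ 2 * CU) := by
    refine le_trans hfb ?_
    have h1 : 1 + -(t / lam) * 1 + (-(t / lam)) ^ 2 * ((4 / η) ^ 2 * EU)
        = 1 + (-(t / lam) + t ^ 2 * CU) := by
      rw [hCUdef]; field_simp; ring
    rw [h1]
    linarith [Real.add_one_le_exp (-(t / lam) + t ^ 2 * CU)]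
  have hge : g ≤ Real.exp (t / mu + t ^ 2 * CV) := by
    refine le_trans hgb ?_
    have h1 : 1 + t / mu * 1 + (t / mu) ^ 2 * ((4 / η) ^ 2 * EV)
        = 1 + (t / mu + t ^ 2 * CV) := by
      rw [hCVdef]; field_simp; ring
    rw [h1]
    linarith [Real.add_one_le_exp (t / mu + t ^ 2 * CV)]
  set γ := t * δ / 2 with hγdef
  have hγ : 0 < γ := by rw [hγdef]; exact div_pos (mul_pos ht hδ) two_pos
  clear_value γ g f t δ C CV CU EV EU
  have hfg : f * g ≤ Real.exp (-γ) := by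
    have hAB : f * g ≤ Real.exp (-(t / lam) + t ^ 2 * CU) * Real.exp (t / mu + t ^ 2 * CV) :=
      mul_le_mul hfe hge hg0 (Real.exp_pos _).le
    rw [← Real.exp_add] at hAB
    refine hAB.trans (Real.exp_le_exp.mpr ?_)
    have h2 : t * (2 * (C + 1)) ≤ δ := (le_div_iff₀ (by linarith)).mp ht2
    have h3 : t * (t * (2 * (C + 1))) ≤ t * δ := mul_le_mul_of_nonneg_left h2 ht.le
    have h4 : t ^ 2 * C ≤ t * δ / 2 - t ^ 2 := by linarith [h3]
    have h5 : -(t / lam) + t / mu = -(t * δ) := by rw [hδdef]; ring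
    have h6 : t ^ 2 * C = t ^ 2 * CU + t ^ 2 * CV := by rw [hCdef]; ring
    rw [hγdef]
    linarith [h4, h5, h6, sq_nonneg t]
  -- Chernoff bound
  have hcher : ∀ w : ℝ, 0 ≤ w → ∀ n : ℕ,
      (ℙ {ω | -w ≤ ∑ k ∈ Finset.range n, (V k ω / mu - U k ω / lam)}).toReal ≤
        Real.exp (-max (γ * n - t * w) 0) := by
    intro w hw n
    set g' : ℕ ⊕ ℕ → ℝ → ℝ :=
      Sum.elim (fun _ (x : ℝ) => -(x / lam)) (fun _ x => x / mu) with hg'def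
    have hg'meas : ∀ i, Measurable (g' i) := by
      rintro (k | k)
      · exact (measurable_id.div_const lam).neg
      · exact measurable_id.div_const mu
    set F : ℕ ⊕ ℕ → Ω → ℝ := fun i => g' i ∘ Sum.elim U V i with hFdef
    have hFindep : iIndepFun F ℙ := hindep.comp g' hg'meas
    have hFmeas : ∀ i, Measurable (F i) := by
      rintro (k | k)
      · exact ((measurable_id.div_const lam).neg).comp (hUmeas k)
      · exact (measurable_id.div_const mu).comp (hVmeas k)
    set dS := (Finset.range n).disjSum (Finset.range n) with hdSdef
    have hintF : ∀ i ∈ dS, Integrable (fun ω => Real.exp (t * F i ω)) ℙ := by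
      rintro (k | k) _
      · refine (integrable_const 1).mono'
          (((hFmeas _).const_mul t).exp).aestronglyMeasurable (ae_of_all _ fun ω => ?_)
        rw [Real.norm_eq_abs, abs_of_pos (Real.exp_pos _)]
        have h1 : t * F (Sum.inl k) ω ≤ 0 := by
          show t * -(U k ω / lam) ≤ 0
          have h2 : 0 ≤ U k ω / lam := div_nonneg (hUnonneg k ω) hlam.le
          have h3 := mul_nonneg ht.le h2
          linarith
        calc Real.exp (t * F (Sum.inl k) ω) ≤ Real.exp 0 := Real.exp_le_exp.mpr h1
          _ = 1 := Real.exp_zero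
      · have hVk : Integrable (fun ω => Real.exp (η * V k ω)) ℙ := by
          have hid := (hVid k).comp (u := fun x : ℝ => Real.exp (η * x))
            ((measurable_id.const_mul η).exp)
          exact hid.integrable_iff.mpr hVexp
        refine hVk.mono'
          (((hFmeas _).const_mul t).exp).aestronglyMeasurable (ae_of_all _ fun ω => ?_)
        rw [Real.norm_eq_abs, abs_of_pos (Real.exp_pos _), Real.exp_le_exp]
        show t * (V k ω / mu) ≤ η * V k ω
        have h1 : 0 ≤ V k ω := hVnonneg k ω
        have h2 : t / mu ≤ η := hs2'.trans (by linarith)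
        calc t * (V k ω / mu) = t / mu * V k ω := by ring
          _ ≤ η * V k ω := mul_le_mul_of_nonneg_right h2 h1
    have hintS : Integrable (fun ω => Real.exp (t * (∑ i ∈ dS, F i) ω)) ℙ :=
      hFindep.integrable_exp_mul_sum hFmeas hintF
    have hmgf : mgf (∑ i ∈ dS, F i) ℙ t = (f * g) ^ n := by
      rw [hFindep.mgf_sum hFmeas dS, hdSdef, Finset.prod_disjSum]
      have h1 : ∀ k ∈ Finset.range n, mgf (F (Sum.inl k)) ℙ t = f := by
        intro k _
        have hcomp : (fun ω => Real.exp (t * F (Sum.inl k) ω))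
            = (fun x => Real.exp (-(t / lam) * x)) ∘ U k := by
          funext ω
          show Real.exp (t * -(U k ω / lam)) = Real.exp (-(t / lam) * U k ω)
          congr 1; ring
        have hint : ∫ ω, (fun x => Real.exp (-(t / lam) * x)) (U k ω) ∂ℙ
            = ∫ ω, (fun x => Real.exp (-(t / lam) * x)) (U 0 ω) ∂ℙ :=
          ((hUid k).comp ((measurable_id.const_mul (-(t / lam))).exp)).integral_eq
        show (∫ ω, Real.exp (t * F (Sum.inl k) ω) ∂ℙ) = f
        rw [hcomp, hfdef]
        exact hint
      have h2 : ∀ k ∈ Finset.range n, mgf (F (Sum.inr k)) ℙ t = g := by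
        intro k _
        have hcomp : (fun ω => Real.exp (t * F (Sum.inr k) ω))
            = (fun x => Real.exp ((t / mu) * x)) ∘ V k := by
          funext ω
          show Real.exp (t * (V k ω / mu)) = Real.exp ((t / mu) * V k ω)
          congr 1; ring
        have hint : ∫ ω, (fun x => Real.exp ((t / mu) * x)) (V k ω) ∂ℙ
            = ∫ ω, (fun x => Real.exp ((t / mu) * x)) (V 0 ω) ∂ℙ :=
          ((hVid k).comp ((measurable_id.const_mul (t / mu)).exp)).integral_eq
        show (∫ ω, Real.exp (t * F (Sum.inr k) ω) ∂ℙ) = g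
        rw [hcomp, hgdef]
        exact hint
      rw [Finset.prod_congr rfl h1, Finset.prod_congr rfl h2, Finset.prod_const,
        Finset.prod_const, Finset.card_range, ← mul_pow]
    have hSeq : {ω | -w ≤ ∑ k ∈ Finset.range n, (V k ω / mu - U k ω / lam)}
        = {ω | -w ≤ (∑ i ∈ dS, F i) ω} := by
      ext ω
      simp only [Set.mem_setOf_eq, Finset.sum_apply]
      rw [hdSdef, Finset.sum_disjSum]
      have : ∀ k, F (Sum.inl k) ω = -(U k ω / lam) := fun _ => rfl
      have h2 : ∀ k, F (Sum.inr k) ω = V k ω / mu := fun _ => rfl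
      simp only [this, h2, Finset.sum_neg_distrib, Finset.sum_sub_distrib]
      constructor <;> intro h <;> linarith
    have hch := measure_ge_le_exp_mul_mgf (μ := ℙ) (X := ∑ i ∈ dS, F i) (-w) ht.le hintS
    rw [hmgf] at hch
    have hbound : (ℙ {ω | -w ≤ (∑ i ∈ dS, F i) ω}).toReal ≤ Real.exp (t * w - γ * n) := by
      refine hch.trans ?_
      have h1 : (f * g) ^ n ≤ Real.exp (-γ) ^ n :=
        pow_le_pow_left₀ (mul_nonneg hf0 hg0) hfg n
      have h2 : Real.exp (-t * -w) * (f * g) ^ n ≤ Real.exp (-t * -w) * Real.exp (-γ) ^ n :=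
        mul_le_mul_of_nonneg_left h1 (Real.exp_pos _).le
      refine h2.trans ?_
      rw [← Real.exp_nat_mul, ← Real.exp_add]
      apply Real.exp_le_exp.mpr
      have : (n : ℝ) * -γ = -(γ * n) := by ring
      linarith
    rw [hSeq]
    rcases le_or_gt (γ * n - t * w) 0 with h | h
    · rw [max_eq_right h, neg_zero, Real.exp_zero]
      calc (ℙ {ω | -w ≤ (∑ i ∈ dS, F i) ω}).toReal
          ≤ (ℙ Set.univ).toReal :=
            ENNReal.toReal_mono (measure_ne_top _ _) (measure_mono (Set.subset_univ _))
        _ = 1 := by simp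
    · rw [max_eq_left h.le]
      refine hbound.trans (Real.exp_le_exp.mpr ?_)
      linarith
  -- conclusion
  refine ⟨γ, hγ, t / mu, div_pos ht hmu, ?_⟩
  intro w1 w2 hw1 hw2 W1 W2 h10 h20 h1rec h2rec α hα n
  have hmt : mu * (t / mu) = t := by field_simp
  rw [hmt]
  have hc0 : 0 ≤ |w1 - w2| ^ α := Real.rpow_nonneg (abs_nonneg _) α
  rcases le_total w2 w1 with hord | hord
  · have hmain := main_aux U V hUmeas hVmeas lam mu t γ hlam hmu hcher
      w1 w2 hw2 hord W1 W2 h10 h20 h1rec h2rec α hα n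
    refine hmain.trans ?_
    have hB := (Real.exp_pos (-max (γ * n - t * w2) 0)).le
    have := mul_le_mul_of_nonneg_right
      (by linarith : Real.exp (-max (γ * n - t * w1) 0) ≤
        Real.exp (-max (γ * n - t * w1) 0) + Real.exp (-max (γ * n - t * w2) 0)) hc0
    linarith
  · have hmain := main_aux U V hUmeas hVmeas lam mu t γ hlam hmu hcher
      w2 w1 hw1 hord W2 W1 h20 h10 h2rec h1rec α hα n
    have hflip : (fun ω => |W1 n ω - W2 n ω| ^ α) = fun ω => |W2 n ω - W1 n ω| ^ α := by
      funext ω; rw [abs_sub_comm]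
    have hflip2 : |w1 - w2| = |w2 - w1| := abs_sub_comm _ _
    rw [hflip, hflip2]
    refine hmain.trans ?_
    have hc0' : 0 ≤ |w2 - w1| ^ α := Real.rpow_nonneg (abs_nonneg _) α
    have hB := (Real.exp_pos (-max (γ * n - t * w1) 0)).le
    have := mul_le_mul_of_nonneg_right
      (by linarith : Real.exp (-max (γ * n - t * w2) 0) ≤
        Real.exp (-max (γ * n - t * w1) 0) + Real.exp (-max (γ * n - t * w2) 0)) hc0'
    linarith
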